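/- Let A be a Banach algebra with unit, H : ℝ → A continuous, t ≥ 0, n_1, n_2 ≥ 1, S_1 ⊆ {1,…,n_1−1} and S_2 ⊆ {1,…,n_2−1}. Then H_{D_{=S_1}^{(n_1)}}(t) · H_{D_{=S_2}^{(n_2)}}(t) = H_{D_{=S_1 ∪ (S_2+n_1)}^{(n_1+n_2)}}(t) + H_{D_{=S_1 ∪ \{n_1\} ∪ (S_2+n_1)}^{(n_1+n_2)}}(t), where S_2 + n_1 := {s + n_1 : s ∈ S_2}. -/

import Mathlib

open MeasureTheory

open Classical in
/-- The descent set of a permutation `σ ∈ S_n` (1-based convention):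
`Desc(σ) = {i ∈ {1,…,n−1} : σ(i) > σ(i+1)}`. -/
noncomputable def descSet {n : ℕ} (σ : Equiv.Perm (Fin n)) : Finset ℕ :=
  (Finset.Ioo 0 n).filter
    (fun i => ∃ h : i < n, σ ⟨i, h⟩ < σ ⟨i - 1, lt_of_le_of_lt (Nat.sub_le i 1) h⟩)

/-- The simplex `Δ_t^n = {0 ≤ t₁ ≤ ⋯ ≤ tₙ ≤ t}` inside `Fin n → ℝ`. -/
def simplex (n : ℕ) (t : ℝ) : Set (Fin n → ℝ) :=
  {u | (∀ i, 0 ≤ u i ∧ u i ≤ t) ∧ ∀ i j, i ≤ j → u i ≤ u j}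

variable {A : Type*} [NormedRing A] [NormedAlgebra ℝ A] [CompleteSpace A]

/-- The iterated integral `H_σ(t) = ∫_{Δ_t^n} H(t_{σ(1)})⋯H(t_{σ(n)}) dt₁⋯dtₙ`. -/
noncomputable def Hperm (H : ℝ → A) {n : ℕ} (σ : Equiv.Perm (Fin n)) (t : ℝ) : A :=
  ∫ u in simplex n t, (List.ofFn (fun j => H (u (σ j)))).prod

/-- `H_n(t) = ∫_{Δ_t^n} H(t₁)⋯H(tₙ) dt₁⋯dtₙ`, with `H_0(t) = 1`. -/
noncomputable def Hn (H : ℝ → A) : ℕ → ℝ → A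
  | 0, _ => 1
  | (n + 1), t => Hperm H (1 : Equiv.Perm (Fin (n + 1))) t

/-- The iterated integral evaluated on the Dynkin element:
`H_{𝒟_m}(t) = Σ_{j=0}^{m-1} (-1)^j H_{D_{={1,…,j}}^{(m)}}(t)`. -/
noncomputable def HDyn (H : ℝ → A) (m : ℕ) (t : ℝ) : A :=
  ∑ j ∈ Finset.range m, (-1 : ℝ) ^ j •
    ∑ σ ∈ Finset.univ.filter
        (fun σ : Equiv.Perm (Fin m) => descSet σ = Finset.Icc 1 j),
      Hperm H σ t

/-! ### Auxiliary combinatorial and measure-theoretic lemmas -/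

lemma mem_descSet_succ {n : ℕ} {σ : Equiv.Perm (Fin n)} {j : ℕ} (h : j + 1 < n) :
    (j + 1) ∈ descSet σ ↔ σ ⟨j + 1, h⟩ < σ ⟨j, Nat.lt_of_succ_lt h⟩ := by
  classical
  simp only [descSet, Finset.mem_filter, Finset.mem_Ioo]
  constructor
  · rintro ⟨-, h', hlt⟩; convert hlt using 3; omega
  · intro hlt; exact ⟨⟨Nat.succ_pos j, h⟩, h, by convert hlt using 3; omega⟩

lemma mem_descSet_lt {n : ℕ} {σ : Equiv.Perm (Fin n)} {i : ℕ} (h : i ∈ descSet σ) :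
    0 < i ∧ i < n := by
  classical
  simp only [descSet, Finset.mem_filter, Finset.mem_Ioo] at h
  exact h.1

/-- The region cut out by a putative descent set `S`. -/
def region (n : ℕ) (S : Finset ℕ) (t : ℝ) : Set (Fin n → ℝ) :=
  {v | (∀ i, 0 ≤ v i ∧ v i ≤ t) ∧
    ∀ i : ℕ, ∀ h : i + 1 < n,
      if i + 1 ∈ S then v ⟨i + 1, h⟩ ≤ v ⟨i, Nat.lt_of_succ_lt h⟩
      else v ⟨i, Nat.lt_of_succ_lt h⟩ ≤ v ⟨i + 1, h⟩}

lemma isClosed_region (n : ℕ) (S : Finset ℕ) (t : ℝ) : IsClosed (region n S t) := by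
  have h : region n S t = (⋂ i : Fin n, {v : Fin n → ℝ | 0 ≤ v i ∧ v i ≤ t}) ∩
      ⋂ (i : ℕ), ⋂ (h : i + 1 < n),
        {v : Fin n → ℝ | if i + 1 ∈ S then v ⟨i + 1, h⟩ ≤ v ⟨i, Nat.lt_of_succ_lt h⟩
          else v ⟨i, Nat.lt_of_succ_lt h⟩ ≤ v ⟨i + 1, h⟩} := by
    ext v
    simp only [region, Set.mem_setOf_eq, Set.mem_inter_iff, Set.mem_iInter]
  rw [h]
  apply IsClosed.inter
  · exact isClosed_iInter fun i => (isClosed_le continuous_const (continuous_apply i)).inter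
      (isClosed_le (continuous_apply i) continuous_const)
  · refine isClosed_iInter fun i => isClosed_iInter fun h => ?_
    split_ifs
    · exact isClosed_le (continuous_apply _) (continuous_apply _)
    · exact isClosed_le (continuous_apply _) (continuous_apply _)

lemma region_subset_Icc (n : ℕ) (S : Finset ℕ) (t : ℝ) :
    region n S t ⊆ Set.Icc (0 : Fin n → ℝ) (fun _ => t) := by
  intro v hv
  exact ⟨fun i => (hv.1 i).1, fun i => (hv.1 i).2⟩

lemma isCompact_region (n : ℕ) (S : Finset ℕ) (t : ℝ) : IsCompact (region n S t) :=
  (isCompact_Icc).of_isClosed_subset (isClosed_region n S t) (region_subset_Icc n S t)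

lemma volume_eq_coords_null {n : ℕ} {i j : Fin n} (hij : i ≠ j) :
    (volume : Measure (Fin n → ℝ)) {v | v i = v j} = 0 := by
  set f : (Fin n → ℝ) →ₗ[ℝ] ℝ :=
    (LinearMap.proj i : (Fin n → ℝ) →ₗ[ℝ] ℝ) - (LinearMap.proj j : (Fin n → ℝ) →ₗ[ℝ] ℝ) with hf
  have hker : {v : Fin n → ℝ | v i = v j} = (LinearMap.ker f : Set (Fin n → ℝ)) := by
    ext v
    simp [hf, LinearMap.mem_ker, sub_eq_zero]
  rw [hker]
  apply Measure.addHaar_submodule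
  intro htop
  rw [LinearMap.ker_eq_top] at htop
  have h1 : f (Pi.single i 1) = 0 := by rw [htop]; rfl
  rw [hf] at h1
  simp only [LinearMap.sub_apply, LinearMap.proj_apply] at h1
  rw [Pi.single_eq_same, Pi.single_eq_of_ne hij.symm] at h1
  norm_num at h1

/-- The non-injective set. -/
def badSet (n : ℕ) : Set (Fin n → ℝ) := {v | ¬ Function.Injective v}

lemma badSet_eq (n : ℕ) : badSet n =
    ⋃ (i : Fin n), ⋃ (j : Fin n), ⋃ (_ : i ≠ j), {v : Fin n → ℝ | v i = v j} := by
  ext v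
  simp only [badSet, Set.mem_setOf_eq, Set.mem_iUnion, Function.Injective]
  constructor
  · intro h
    push_neg at h
    obtain ⟨a, b, hab, hne⟩ := h
    exact ⟨a, b, hne, hab⟩
  · rintro ⟨a, b, hne, hab⟩ h
    exact hne (h hab)

lemma measurableSet_badSet (n : ℕ) : MeasurableSet (badSet n) := by
  rw [badSet_eq]
  exact MeasurableSet.iUnion fun i => MeasurableSet.iUnion fun j => MeasurableSet.iUnion
    fun _ => measurableSet_eq_fun (measurable_pi_apply i) (measurable_pi_apply j)

lemma volume_badSet (n : ℕ) : (volume : Measure (Fin n → ℝ)) (badSet n) = 0 := by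
  rw [badSet_eq]
  exact measure_iUnion_null fun i => measure_iUnion_null fun j => measure_iUnion_null
    fun hij => volume_eq_coords_null hij

/-- coordinate permutation as a measurable equiv: `permEquiv σ u = u ∘ σ`. -/
noncomputable def permEquiv {n : ℕ} (σ : Equiv.Perm (Fin n)) :
    (Fin n → ℝ) ≃ᵐ (Fin n → ℝ) :=
  (MeasurableEquiv.piCongrLeft (fun _ => ℝ) σ).symm

lemma permEquiv_apply {n : ℕ} (σ : Equiv.Perm (Fin n)) (u : Fin n → ℝ) (j : Fin n) :
    permEquiv σ u j = u (σ j) := by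
  simp [permEquiv, MeasurableEquiv.piCongrLeft, Equiv.piCongrLeft_symm_apply]

lemma measurePreserving_permEquiv {n : ℕ} (σ : Equiv.Perm (Fin n)) :
    MeasurePreserving (permEquiv σ) volume volume :=
  (volume_measurePreserving_piCongrLeft (fun _ => ℝ) σ).symm _

/-- The transported simplex. -/
def Tset (n : ℕ) (σ : Equiv.Perm (Fin n)) (t : ℝ) : Set (Fin n → ℝ) :=
  {v | (v ∘ ⇑σ⁻¹) ∈ simplex n t}

lemma permEquiv_image_simplex {n : ℕ} (σ : Equiv.Perm (Fin n)) (t : ℝ) :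
    (permEquiv σ) '' simplex n t = Tset n σ t := by
  ext v
  constructor
  · rintro ⟨u, hu, rfl⟩
    have h : (permEquiv σ u) ∘ ⇑σ⁻¹ = u := by
      funext j; simp [permEquiv_apply]
    show (permEquiv σ u) ∘ ⇑σ⁻¹ ∈ simplex n t; rw [h]; exact hu
  · intro hv
    refine ⟨v ∘ ⇑σ⁻¹, hv, ?_⟩
    funext j; simp [permEquiv_apply]

lemma Hperm_eq_setIntegral (H : ℝ → A) {n : ℕ} (σ : Equiv.Perm (Fin n)) (t : ℝ) :
    Hperm H σ t = ∫ v in Tset n σ t, (List.ofFn (fun j => H (v j))).prod := by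
  rw [← permEquiv_image_simplex σ t,
    (measurePreserving_permEquiv σ).setIntegral_image_emb
      (MeasurableEquiv.measurableEmbedding _) _ _]
  rfl

lemma isClosed_simplex (n : ℕ) (t : ℝ) : IsClosed (simplex n t) := by
  have h : simplex n t = (⋂ i : Fin n, {u : Fin n → ℝ | 0 ≤ u i ∧ u i ≤ t}) ∩
      ⋂ (i : Fin n), ⋂ (j : Fin n), ⋂ (_ : i ≤ j), {u : Fin n → ℝ | u i ≤ u j} := by
    ext u
    simp only [simplex, Set.mem_setOf_eq, Set.mem_inter_iff, Set.mem_iInter]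
  rw [h]
  apply IsClosed.inter
  · exact isClosed_iInter fun i => (isClosed_le continuous_const (continuous_apply i)).inter
      (isClosed_le (continuous_apply i) continuous_const)
  · exact isClosed_iInter fun i => isClosed_iInter fun j => isClosed_iInter fun _ =>
      isClosed_le (continuous_apply i) (continuous_apply j)

lemma isClosed_Tset (n : ℕ) (σ : Equiv.Perm (Fin n)) (t : ℝ) : IsClosed (Tset n σ t) :=
  (isClosed_simplex n t).preimage (continuous_pi fun i => continuous_apply _)

lemma Tset_subset_Icc (n : ℕ) (σ : Equiv.Perm (Fin n)) (t : ℝ) :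
    Tset n σ t ⊆ Set.Icc (0 : Fin n → ℝ) (fun _ => t) := by
  intro v hv
  refine ⟨fun i => ?_, fun i => ?_⟩
  · simpa using (hv.1 (σ i)).1
  · simpa using (hv.1 (σ i)).2

lemma Tset_subset_region {n : ℕ} (σ : Equiv.Perm (Fin n)) (t : ℝ) :
    Tset n σ t ⊆ region n (descSet σ) t := by
  intro v hv
  obtain ⟨hb, hm⟩ := hv
  constructor
  · intro i
    have h := hb (σ i)
    simpa using h
  · intro i h
    set a : Fin n := ⟨i, Nat.lt_of_succ_lt h⟩
    set b : Fin n := ⟨i + 1, h⟩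
    by_cases hd : i + 1 ∈ descSet σ
    · rw [if_pos hd]
      have hlt : σ b < σ a := (mem_descSet_succ h).1 hd
      have h2 := hm (σ b) (σ a) hlt.le
      simpa using h2
    · rw [if_neg hd]
      have hle : σ a ≤ σ b :=
        le_of_not_gt (fun hc => hd ((mem_descSet_succ h).2 hc))
      have h2 := hm (σ a) (σ b) hle
      simpa using h2

lemma exists_Tset {n : ℕ} {v : Fin n → ℝ} (hinj : Function.Injective v) {S : Finset ℕ}
    {t : ℝ} (hS : S ⊆ Finset.Icc 1 (n - 1)) (hn : 0 < n) (hv : v ∈ region n S t) :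
    v ∈ Tset n (Tuple.sort v)⁻¹ t ∧ descSet (Tuple.sort v)⁻¹ = S := by
  set σ : Equiv.Perm (Fin n) := (Tuple.sort v)⁻¹ with hσ
  have hcomp : v ∘ ⇑σ⁻¹ = v ∘ ⇑(Tuple.sort v) := by rw [hσ, inv_inv]
  have hmono : Monotone (v ∘ ⇑σ⁻¹) := by rw [hcomp]; exact Tuple.monotone_sort v
  have hsm : StrictMono (v ∘ ⇑σ⁻¹) :=
    hmono.strictMono_of_injective (hinj.comp (Equiv.injective _))
  have hTv : v ∈ Tset n σ t := by
    refine ⟨fun i => ?_, fun i j hij => hmono hij⟩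
    exact hv.1 _
  refine ⟨hTv, ?_⟩
  ext i
  constructor
  · intro hi
    obtain ⟨hpos, hilt⟩ := mem_descSet_lt hi
    obtain ⟨j, rfl⟩ : ∃ j, i = j + 1 := ⟨i - 1, (Nat.succ_pred_eq_of_pos hpos).symm⟩
    have hlt : σ ⟨j + 1, hilt⟩ < σ ⟨j, Nat.lt_of_succ_lt hilt⟩ := (mem_descSet_succ hilt).1 hi
    have hvlt : v ⟨j + 1, hilt⟩ < v ⟨j, Nat.lt_of_succ_lt hilt⟩ := by
      have h := hsm hlt
      simpa using h
    by_contra hns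
    have h := hv.2 j hilt
    rw [if_neg hns] at h
    exact absurd (lt_of_le_of_lt h hvlt) (lt_irrefl _)
  · intro hi
    obtain ⟨h1, h2⟩ := Finset.mem_Icc.1 (hS hi)
    have hilt : i < n := lt_of_le_of_lt h2 (Nat.pred_lt hn.ne')
    obtain ⟨j, rfl⟩ : ∃ j, i = j + 1 := ⟨i - 1, (Nat.succ_pred_eq_of_pos h1).symm⟩
    have hle : v ⟨j + 1, hilt⟩ ≤ v ⟨j, Nat.lt_of_succ_lt hilt⟩ := by
      have h := hv.2 j hilt
      rwa [if_pos hi] at h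
    have hne : v ⟨j + 1, hilt⟩ ≠ v ⟨j, Nat.lt_of_succ_lt hilt⟩ := by
      intro hcon
      have h := hinj hcon
      simp [Fin.ext_iff] at h
    have hvlt : v ⟨j + 1, hilt⟩ < v ⟨j, Nat.lt_of_succ_lt hilt⟩ := lt_of_le_of_ne hle hne
    rw [mem_descSet_succ hilt]
    have h : (v ∘ ⇑σ⁻¹) (σ ⟨j + 1, hilt⟩) < (v ∘ ⇑σ⁻¹) (σ ⟨j, Nat.lt_of_succ_lt hilt⟩) := by
      simpa using hvlt
    exact hsm.lt_iff_lt.1 h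

lemma Tset_unique {n : ℕ} {v : Fin n → ℝ} (hinj : Function.Injective v)
    {σ τ : Equiv.Perm (Fin n)} {t : ℝ} (hσ : v ∈ Tset n σ t) (hτ : v ∈ Tset n τ t) :
    σ = τ := by
  have h1 : Monotone (v ∘ ⇑σ⁻¹) := fun i j hij => hσ.2 i j hij
  have h2 : Monotone (v ∘ ⇑τ⁻¹) := fun i j hij => hτ.2 i j hij
  have h := Tuple.unique_monotone h1 h2
  have hinv : σ⁻¹ = τ⁻¹ := Equiv.ext fun x => hinj (congrFun h x)
  exact inv_injective hinv

lemma continuous_prodFn {H : ℝ → A} (hH : Continuous H) (n : ℕ) :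
    Continuous (fun v : Fin n → ℝ => (List.ofFn fun j => H (v j)).prod) := by
  have he : (fun v : Fin n → ℝ => (List.ofFn fun j => H (v j)).prod)
      = fun v => ((List.finRange n).map (fun j => H (v j))).prod := by
    funext v; rw [List.ofFn_eq_map]
  rw [he]
  exact continuous_list_prod _ fun i _ => hH.comp (continuous_apply i)

lemma integrableOn_prodFn {H : ℝ → A} (hH : Continuous H) {n : ℕ} {s : Set (Fin n → ℝ)}
    {t : ℝ} (hs : s ⊆ Set.Icc (0 : Fin n → ℝ) (fun _ => t)) :
    IntegrableOn (fun v : Fin n → ℝ => (List.ofFn fun j => H (v j)).prod) s volume :=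
  (((continuous_prodFn hH n).continuousOn).integrableOn_compact isCompact_Icc).mono_set hs

/-- Step 1: the sum over a descent class is a single integral over the descent region. -/
lemma sum_descClass (H : ℝ → A) (hH : Continuous H) {n : ℕ} (hn : 0 < n) (S : Finset ℕ)
    (hS : S ⊆ Finset.Icc 1 (n - 1)) (t : ℝ) :
    ∑ σ ∈ Finset.univ.filter (fun σ : Equiv.Perm (Fin n) => descSet σ = S), Hperm H σ t
      = ∫ v in region n S t, (List.ofFn fun j => H (v j)).prod := by
  classical
  set cls := Finset.univ.filter (fun σ : Equiv.Perm (Fin n) => descSet σ = S) with hcls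
  have hTae : ∀ σ : Equiv.Perm (Fin n), (Tset n σ t \ badSet n) =ᵐ[volume] Tset n σ t :=
    fun σ => diff_ae_eq_self.2 (measure_mono_null Set.inter_subset_right (volume_badSet n))
  have step1 : ∀ σ ∈ cls, Hperm H σ t
      = ∫ v in Tset n σ t \ badSet n, (List.ofFn fun j => H (v j)).prod := by
    intro σ _
    rw [Hperm_eq_setIntegral]
    exact (setIntegral_congr_set (hTae σ)).symm
  rw [Finset.sum_congr rfl step1]
  rw [← integral_biUnion_finset cls
      (fun σ _ => ((isClosed_Tset n σ t).measurableSet).diff (measurableSet_badSet n))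
      ?pd ?int]
  case pd =>
    intro σ _ τ _ hne
    refine Set.disjoint_left.2 fun v hvσ hvτ => hne ?_
    have hinj : Function.Injective v := not_not.mp hvσ.2
    exact Tset_unique hinj hvσ.1 hvτ.1
  case int =>
    intro σ _
    exact integrableOn_prodFn hH ((Set.diff_subset).trans (Tset_subset_Icc n σ t))
  apply setIntegral_congr_set
  rw [MeasureTheory.ae_eq_set]
  constructor
  · have hsub : (⋃ σ ∈ cls, Tset n σ t \ badSet n) ⊆ region n S t := by
      intro v hv
      simp only [Set.mem_iUnion] at hv
      obtain ⟨σ, hσ, hvσ⟩ := hv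
      have hdS : descSet σ = S := (Finset.mem_filter.1 hσ).2
      exact hdS ▸ Tset_subset_region σ t hvσ.1
    rw [Set.diff_eq_empty.2 hsub]
    exact measure_empty
  · refine measure_mono_null ?_ (volume_badSet n)
    intro v hv
    obtain ⟨hvr, hvn⟩ := hv
    by_contra hb
    have hinj : Function.Injective v := not_not.mp hb
    obtain ⟨hT, hD⟩ := exists_Tset hinj hS hn hvr
    refine hvn ?_
    simp only [Set.mem_iUnion]
    exact ⟨(Tuple.sort v)⁻¹, Finset.mem_filter.2 ⟨Finset.mem_univ _, hD⟩, hT, hb⟩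

section split
variable {n₁ n₂ : ℕ} {S₁ S₂ : Finset ℕ}

lemma memA_lt (hS₂ : S₂ ⊆ Finset.Icc 1 (n₂ - 1)) {i : ℕ} (hi : i + 1 < n₁) :
    (i + 1 ∈ S₁ ∪ S₂.image (· + n₁) ↔ i + 1 ∈ S₁)
    ∧ (i + 1 ∈ S₁ ∪ {n₁} ∪ S₂.image (· + n₁) ↔ i + 1 ∈ S₁) := by
  have himg : i + 1 ∉ S₂.image (· + n₁) := by
    simp only [Finset.mem_image, not_exists]
    rintro x ⟨hx, he⟩
    have := (Finset.mem_Icc.1 (hS₂ hx)).1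
    omega
  have hne : i + 1 ≠ n₁ := by omega
  constructor
  · simp [Finset.mem_union, himg]
  · simp [Finset.mem_union, himg, hne]

lemma memA_eq (h₁ : 1 ≤ n₁) (hS₁ : S₁ ⊆ Finset.Icc 1 (n₁ - 1))
    (hS₂ : S₂ ⊆ Finset.Icc 1 (n₂ - 1)) :
    (n₁ ∉ S₁ ∪ S₂.image (· + n₁)) ∧ (n₁ ∈ S₁ ∪ {n₁} ∪ S₂.image (· + n₁)) := by
  have himg : n₁ ∉ S₂.image (· + n₁) := by
    simp only [Finset.mem_image, not_exists]
    rintro x ⟨hx, he⟩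
    have := (Finset.mem_Icc.1 (hS₂ hx)).1
    omega
  have hn : n₁ ∉ S₁ := by
    intro hx
    have := (Finset.mem_Icc.1 (hS₁ hx)).2
    omega
  constructor
  · simp [Finset.mem_union, himg, hn]
  · simp [Finset.mem_union]

lemma memA_gt (hS₁ : S₁ ⊆ Finset.Icc 1 (n₁ - 1)) {s : ℕ} :
    (n₁ + (s + 1) ∈ S₁ ∪ S₂.image (· + n₁) ↔ s + 1 ∈ S₂)
    ∧ (n₁ + (s + 1) ∈ S₁ ∪ {n₁} ∪ S₂.image (· + n₁) ↔ s + 1 ∈ S₂) := by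
  have hS : n₁ + (s + 1) ∉ S₁ := by
    intro hx
    have := (Finset.mem_Icc.1 (hS₁ hx)).2
    omega
  have hne : n₁ + (s + 1) ≠ n₁ := by omega
  have himg : n₁ + (s + 1) ∈ S₂.image (· + n₁) ↔ s + 1 ∈ S₂ := by
    simp only [Finset.mem_image]
    constructor
    · rintro ⟨x, hx, he⟩
      have hxe : x = s + 1 := by omega
      rwa [hxe] at hx
    · intro hx
      exact ⟨s + 1, hx, by omega⟩
  constructor
  · simp [Finset.mem_union, hS, himg]
  · simp [Finset.mem_union, hS, hne, himg]

lemma apply_castAdd_mk (u : Fin (n₁ + n₂) → ℝ) (i : ℕ) (h : i < n₁) :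
    u (Fin.castAdd n₂ ⟨i, h⟩) = u ⟨i, by omega⟩ := by
  congr 1

lemma apply_natAdd_mk (u : Fin (n₁ + n₂) → ℝ) (s : ℕ) (h : s < n₂) :
    u (Fin.natAdd n₁ ⟨s, h⟩) = u ⟨n₁ + s, by omega⟩ := by
  congr 1

/-- The block-splitting identity for regions. -/
lemma split_region_iff (h₁ : 1 ≤ n₁) (h₂ : 1 ≤ n₂)
    (hS₁ : S₁ ⊆ Finset.Icc 1 (n₁ - 1)) (hS₂ : S₂ ⊆ Finset.Icc 1 (n₂ - 1)) (t : ℝ)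
    (u : Fin (n₁ + n₂) → ℝ) :
    ((fun i : Fin n₁ => u (Fin.castAdd n₂ i)) ∈ region n₁ S₁ t ∧
      (fun j : Fin n₂ => u (Fin.natAdd n₁ j)) ∈ region n₂ S₂ t)
    ↔ (u ∈ region (n₁ + n₂) (S₁ ∪ S₂.image (· + n₁)) t ∨
        u ∈ region (n₁ + n₂) (S₁ ∪ {n₁} ∪ S₂.image (· + n₁)) t) := by
  constructor
  · rintro ⟨⟨hb₁, hc₁⟩, hb₂, hc₂⟩
    simp only at hb₁ hc₁ hb₂ hc₂
    -- bounds for u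
    have hbu : ∀ k : Fin (n₁ + n₂), 0 ≤ u k ∧ u k ≤ t := by
      intro k
      by_cases hk : (k : ℕ) < n₁
      · have := hb₁ ⟨k, hk⟩
        rwa [apply_castAdd_mk u k hk, show (⟨(k : ℕ), by omega⟩ : Fin (n₁ + n₂)) = k by
          ext; rfl] at this
      · have hk2 : (k : ℕ) - n₁ < n₂ := by omega
        have := hb₂ ⟨(k : ℕ) - n₁, hk2⟩
        rwa [apply_natAdd_mk u _ hk2, show (⟨n₁ + ((k : ℕ) - n₁), by omega⟩ : Fin (n₁ + n₂)) = k
          by ext; simp; omega] at this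
    -- the two constraint facts independent of the middle
    have hcon : ∀ i : ℕ, ∀ h : i + 1 < n₁ + n₂, i + 1 ≠ n₁ →
        ∀ (SS : Finset ℕ), (i + 1 < n₁ → (i + 1 ∈ SS ↔ i + 1 ∈ S₁)) →
        (∀ s : ℕ, i = n₁ + s → (i + 1 ∈ SS ↔ s + 1 ∈ S₂)) →
        (if i + 1 ∈ SS then u ⟨i + 1, h⟩ ≤ u ⟨i, Nat.lt_of_succ_lt h⟩
          else u ⟨i, Nat.lt_of_succ_lt h⟩ ≤ u ⟨i + 1, h⟩) := by
      intro i h hne SS hlt hgt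
      rcases Nat.lt_trichotomy (i + 1) n₁ with hi | hi | hi
      · have hc := hc₁ i hi
        rw [apply_castAdd_mk u (i+1) hi, apply_castAdd_mk u i (by omega)] at hc
        by_cases hmem : i + 1 ∈ S₁
        · rw [if_pos ((hlt hi).2 hmem), ]
          rw [if_pos hmem] at hc
          exact hc
        · rw [if_neg (fun hx => hmem ((hlt hi).1 hx))]
          rw [if_neg hmem] at hc
          exact hc
      · exact absurd hi hne
      · obtain ⟨s, rfl⟩ : ∃ s, i = n₁ + s := ⟨i - n₁, by omega⟩
        have hs : s + 1 < n₂ := by omega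
        have hc := hc₂ s hs
        rw [apply_natAdd_mk u (s+1) hs, apply_natAdd_mk u s (by omega)] at hc
        by_cases hmem : s + 1 ∈ S₂
        · rw [if_pos ((hgt s rfl).2 hmem)]
          rw [if_pos hmem] at hc
          exact hc
        · rw [if_neg (fun hx => hmem ((hgt s rfl).1 hx))]
          rw [if_neg hmem] at hc
          exact hc
    have hmid₁ : (n₁ : ℕ) - 1 + 1 = n₁ := by omega
    rcases le_total (u ⟨n₁ - 1, by omega⟩) (u ⟨n₁, by omega⟩) with hmid | hmid
    · left
      refine ⟨hbu, ?_⟩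
      intro i h
      by_cases hne : i + 1 = n₁
      · rw [if_neg (show ¬(i + 1 ∈ S₁ ∪ S₂.image (· + n₁)) by
            rw [hne]; exact (memA_eq h₁ hS₁ hS₂).1)]
        have h1 : (⟨i, Nat.lt_of_succ_lt h⟩ : Fin (n₁ + n₂)) = ⟨n₁ - 1, by omega⟩ := by
          ext; simp; omega
        have h2 : (⟨i + 1, h⟩ : Fin (n₁ + n₂)) = ⟨n₁, by omega⟩ := by ext; simp; omega
        rw [h1, h2]; exact hmid
      · exact hcon i h hne _ (fun hl => (memA_lt hS₂ hl).1)
          (fun s hse => by rw [show i + 1 = n₁ + (s + 1) by omega]; exact (memA_gt hS₁).1)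
    · right
      refine ⟨hbu, ?_⟩
      intro i h
      by_cases hne : i + 1 = n₁
      · rw [if_pos (show i + 1 ∈ S₁ ∪ {n₁} ∪ S₂.image (· + n₁) by
            rw [hne]; exact (memA_eq h₁ hS₁ hS₂).2)]
        have h1 : (⟨i, Nat.lt_of_succ_lt h⟩ : Fin (n₁ + n₂)) = ⟨n₁ - 1, by omega⟩ := by
          ext; simp; omega
        have h2 : (⟨i + 1, h⟩ : Fin (n₁ + n₂)) = ⟨n₁, by omega⟩ := by ext; simp; omega
        rw [h1, h2]; exact hmid
      · exact hcon i h hne _ (fun hl => (memA_lt hS₂ hl).2)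
          (fun s hse => by rw [show i + 1 = n₁ + (s + 1) by omega]; exact (memA_gt hS₁).2)
  · intro hu
    have key : ∀ (SS : Finset ℕ), u ∈ region (n₁ + n₂) SS t →
        (∀ i : ℕ, i + 1 < n₁ → (i + 1 ∈ SS ↔ i + 1 ∈ S₁)) →
        (∀ s : ℕ, s + 1 < n₂ → (n₁ + (s + 1) ∈ SS ↔ s + 1 ∈ S₂)) →
        ((fun i : Fin n₁ => u (Fin.castAdd n₂ i)) ∈ region n₁ S₁ t ∧
          (fun j : Fin n₂ => u (Fin.natAdd n₁ j)) ∈ region n₂ S₂ t) := by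
      rintro SS ⟨hb, hc⟩ hlt hgt
      refine ⟨⟨fun i => ?_, fun i h => ?_⟩, ⟨fun j => ?_, fun s h => ?_⟩⟩ <;> simp only
      · exact hb _
      · have hc' := hc i (by omega)
        rw [apply_castAdd_mk u (i+1) h, apply_castAdd_mk u i (by omega)]
        by_cases hmem : i + 1 ∈ S₁
        · rw [if_pos ((hlt i h).2 hmem)] at hc'
          rw [if_pos hmem]
          exact hc'
        · rw [if_neg (fun hx => hmem ((hlt i h).1 hx))] at hc'
          rw [if_neg hmem]
          exact hc'
      · exact hb _
      · have hc' := hc (n₁ + s) (by omega)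
        rw [apply_natAdd_mk u (s+1) h, apply_natAdd_mk u s (by omega)]
        have hiff : n₁ + s + 1 ∈ SS ↔ s + 1 ∈ S₂ := hgt s h
        by_cases hmem : s + 1 ∈ S₂
        · rw [if_pos (hiff.2 hmem)] at hc'
          rw [if_pos hmem]
          exact hc'
        · rw [if_neg (fun hx => hmem (hiff.1 hx))] at hc'
          rw [if_neg hmem]
          exact hc'
    rcases hu with hu | hu
    · exact key _ hu (fun i hi => (memA_lt hS₂ hi).1) (fun s hs => (memA_gt hS₁).1)
    · exact key _ hu (fun i hi => (memA_lt hS₂ hi).2) (fun s hs => (memA_gt hS₁).2)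
end split

noncomputable def splitEquiv (n₁ n₂ : ℕ) :
    (Fin (n₁ + n₂) → ℝ) ≃ᵐ (Fin n₁ → ℝ) × (Fin n₂ → ℝ) :=
  ((MeasurableEquiv.piCongrLeft (fun _ : Fin (n₁ + n₂) => ℝ) finSumFinEquiv).symm).trans
    (MeasurableEquiv.sumPiEquivProdPi (fun _ => ℝ))

lemma splitEquiv_fst (n₁ n₂ : ℕ) (u : Fin (n₁ + n₂) → ℝ) (i : Fin n₁) :
    (splitEquiv n₁ n₂ u).1 i = u (Fin.castAdd n₂ i) := by
  simp [splitEquiv, MeasurableEquiv.trans, MeasurableEquiv.sumPiEquivProdPi,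
    Equiv.sumPiEquivProdPi, MeasurableEquiv.piCongrLeft, Equiv.piCongrLeft_symm_apply]

lemma splitEquiv_snd (n₁ n₂ : ℕ) (u : Fin (n₁ + n₂) → ℝ) (j : Fin n₂) :
    (splitEquiv n₁ n₂ u).2 j = u (Fin.natAdd n₁ j) := by
  simp [splitEquiv, MeasurableEquiv.trans, MeasurableEquiv.sumPiEquivProdPi,
    Equiv.sumPiEquivProdPi, MeasurableEquiv.piCongrLeft, Equiv.piCongrLeft_symm_apply]

lemma measurePreserving_splitEquiv (n₁ n₂ : ℕ) :
    MeasurePreserving (splitEquiv n₁ n₂) volume volume :=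
  (volume_measurePreserving_sumPiEquivProdPi (fun _ : Fin n₁ ⊕ Fin n₂ => ℝ)).comp
    ((volume_measurePreserving_piCongrLeft (fun _ : Fin (n₁ + n₂) => ℝ) finSumFinEquiv).symm _)



lemma transfer_split (n₁ n₂ : ℕ) (F : (Fin n₁ → ℝ) × (Fin n₂ → ℝ) → A)
    (s : Set ((Fin n₁ → ℝ) × (Fin n₂ → ℝ))) :
    ∫ p in s, F p = ∫ u in (splitEquiv n₁ n₂) ⁻¹' s, F (splitEquiv n₁ n₂ u) := by
  conv_lhs => rw [← Set.image_preimage_eq s (splitEquiv n₁ n₂).surjective]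
  exact (measurePreserving_splitEquiv n₁ n₂).setIntegral_image_emb
    (MeasurableEquiv.measurableEmbedding _) F _

lemma integral_mul_integral {α β : Type*} [MeasurableSpace α] [MeasurableSpace β]
    {μ : Measure α} {ν : Measure β} [SFinite μ] [SFinite ν]
    {f : α → A} {g : β → A} (hf : Integrable f μ) (hg : Integrable g ν)
    (hfg : Integrable (fun p : α × β => f p.1 * g p.2) (μ.prod ν)) :
    (∫ x, f x ∂μ) * (∫ y, g y ∂ν) = ∫ p, f p.1 * g p.2 ∂(μ.prod ν) := by
  rw [integral_prod _ hfg]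
  have hin : ∀ x, ∫ y, f x * g y ∂ν = f x * ∫ y, g y ∂ν := fun x => by
    simpa using ContinuousLinearMap.integral_comp_comm (ContinuousLinearMap.mul ℝ A (f x)) hg
  have he : (fun x => ∫ y, f x * g y ∂ν) = fun x => f x * ∫ y, g y ∂ν := funext hin
  rw [he]
  simpa using (ContinuousLinearMap.integral_comp_comm
    ((ContinuousLinearMap.mul ℝ A).flip (∫ y, g y ∂ν)) hf).symm

lemma setIntegral_mul_setIntegral {n₁ n₂ : ℕ} (f₁ : (Fin n₁ → ℝ) → A) (f₂ : (Fin n₂ → ℝ) → A)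
    (R₁ : Set (Fin n₁ → ℝ)) (R₂ : Set (Fin n₂ → ℝ))
    (h₁ : IntegrableOn f₁ R₁ volume) (h₂ : IntegrableOn f₂ R₂ volume)
    (hP : IntegrableOn (fun p : (Fin n₁ → ℝ) × (Fin n₂ → ℝ) => f₁ p.1 * f₂ p.2)
      (R₁ ×ˢ R₂) volume) :
    (∫ v in R₁, f₁ v) * (∫ w in R₂, f₂ w)
      = ∫ p in R₁ ×ˢ R₂, f₁ p.1 * f₂ p.2 := by
  rw [Measure.volume_eq_prod, ← Measure.prod_restrict]
  refine integral_mul_integral h₁ h₂ ?_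
  rw [Measure.prod_restrict]
  rw [Measure.volume_eq_prod] at hP
  exact hP

lemma F_split (H : ℝ → A) (n₁ n₂ : ℕ) (u : Fin (n₁ + n₂) → ℝ) :
    (List.ofFn fun j => H ((splitEquiv n₁ n₂ u).1 j)).prod *
      (List.ofFn fun j => H ((splitEquiv n₁ n₂ u).2 j)).prod
    = (List.ofFn fun j => H (u j)).prod := by
  simp only [splitEquiv_fst, splitEquiv_snd]
  conv_rhs => rw [List.ofFn_add (f := fun j => H (u j)), List.prod_append]
  rfl


set_option maxHeartbeats 1000000 in
/-- `H_{D_{=S₁}^{(n₁)}}(t) · H_{D_{=S₂}^{(n₂)}}(t)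
= H_{D_{=S₁ ∪ (S₂+n₁)}^{(n₁+n₂)}}(t) + H_{D_{=S₁ ∪ {n₁} ∪ (S₂+n₁)}^{(n₁+n₂)}}(t)`. -/
theorem HDeq_mul_HDeq (H : ℝ → A) (hH : Continuous H) (t : ℝ) (ht : 0 ≤ t)
    (n₁ n₂ : ℕ) (h₁ : 1 ≤ n₁) (h₂ : 1 ≤ n₂)
    (S₁ S₂ : Finset ℕ) (hS₁ : S₁ ⊆ Finset.Icc 1 (n₁ - 1)) (hS₂ : S₂ ⊆ Finset.Icc 1 (n₂ - 1)) :
    (∑ σ ∈ Finset.univ.filter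
        (fun σ : Equiv.Perm (Fin n₁) => descSet σ = S₁), Hperm H σ t) *
      (∑ τ ∈ Finset.univ.filter
        (fun τ : Equiv.Perm (Fin n₂) => descSet τ = S₂), Hperm H τ t) =
      (∑ ρ ∈ Finset.univ.filter
          (fun ρ : Equiv.Perm (Fin (n₁ + n₂)) =>
            descSet ρ = S₁ ∪ S₂.image (· + n₁)),
        Hperm H ρ t) +
      (∑ ρ ∈ Finset.univ.filter
          (fun ρ : Equiv.Perm (Fin (n₁ + n₂)) =>
            descSet ρ = S₁ ∪ {n₁} ∪ S₂.image (· + n₁)),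
        Hperm H ρ t) := by
  classical
  obtain ⟨m, rfl⟩ : ∃ m, n₁ = m + 1 := ⟨n₁ - 1, by omega⟩
  have hA : S₁ ∪ S₂.image (· + (m + 1)) ⊆ Finset.Icc 1 (m + 1 + n₂ - 1) := by
    intro x hx
    rcases Finset.mem_union.1 hx with hx | hx
    · have := Finset.mem_Icc.1 (hS₁ hx); rw [Finset.mem_Icc]; omega
    · obtain ⟨y, hy, rfl⟩ := Finset.mem_image.1 hx
      have := Finset.mem_Icc.1 (hS₂ hy); rw [Finset.mem_Icc]; omega
  have hB : S₁ ∪ {m + 1} ∪ S₂.image (· + (m + 1)) ⊆ Finset.Icc 1 (m + 1 + n₂ - 1) := by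
    intro x hx
    rcases Finset.mem_union.1 hx with hx | hx
    · rcases Finset.mem_union.1 hx with hx | hx
      · have := Finset.mem_Icc.1 (hS₁ hx); rw [Finset.mem_Icc]; omega
      · rw [Finset.mem_singleton] at hx; rw [Finset.mem_Icc]; omega
    · obtain ⟨y, hy, rfl⟩ := Finset.mem_image.1 hx
      have := Finset.mem_Icc.1 (hS₂ hy); rw [Finset.mem_Icc]; omega
  rw [sum_descClass H hH (by omega : 0 < m + 1) S₁ hS₁ t,
      sum_descClass H hH (by omega : 0 < n₂) S₂ hS₂ t,
      sum_descClass H hH (by omega : 0 < m + 1 + n₂) _ hA t,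
      sum_descClass H hH (by omega : 0 < m + 1 + n₂) _ hB t]
  have hint₁ : IntegrableOn (fun v : Fin (m + 1) → ℝ => (List.ofFn fun j => H (v j)).prod)
      (region (m + 1) S₁ t) volume := integrableOn_prodFn hH (region_subset_Icc _ _ _)
  have hint₂ : IntegrableOn (fun v : Fin n₂ → ℝ => (List.ofFn fun j => H (v j)).prod)
      (region n₂ S₂ t) volume := integrableOn_prodFn hH (region_subset_Icc _ _ _)
  have hFcont : Continuous (fun p : (Fin (m + 1) → ℝ) × (Fin n₂ → ℝ) =>
      (List.ofFn fun j => H (p.1 j)).prod * (List.ofFn fun j => H (p.2 j)).prod) :=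
    ((continuous_prodFn hH (m + 1)).comp continuous_fst).mul
      ((continuous_prodFn hH n₂).comp continuous_snd)
  have hFint : IntegrableOn (fun p : (Fin (m + 1) → ℝ) × (Fin n₂ → ℝ) =>
      (List.ofFn fun j => H (p.1 j)).prod * (List.ofFn fun j => H (p.2 j)).prod)
      (region (m + 1) S₁ t ×ˢ region n₂ S₂ t) volume :=
    hFcont.continuousOn.integrableOn_compact
      ((isCompact_region _ _ _).prod (isCompact_region _ _ _))
  rw [setIntegral_mul_setIntegral _ _ _ _ hint₁ hint₂ hFint,
    transfer_split (m + 1) n₂ _ _]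
  have hQ : (splitEquiv (m + 1) n₂) ⁻¹' (region (m + 1) S₁ t ×ˢ region n₂ S₂ t)
      = region (m + 1 + n₂) (S₁ ∪ S₂.image (· + (m + 1))) t
        ∪ region (m + 1 + n₂) (S₁ ∪ {m + 1} ∪ S₂.image (· + (m + 1))) t := by
    ext u
    rw [Set.mem_preimage, Set.mem_prod, Set.mem_union]
    have e1 : (splitEquiv (m + 1) n₂ u).1 = fun i => u (Fin.castAdd n₂ i) :=
      funext (splitEquiv_fst (m + 1) n₂ u)
    have e2 : (splitEquiv (m + 1) n₂ u).2 = fun j => u (Fin.natAdd (m + 1) j) :=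
      funext (splitEquiv_snd (m + 1) n₂ u)
    rw [e1, e2]
    exact split_region_iff h₁ h₂ hS₁ hS₂ t u
  rw [hQ]
  have hgF : ∀ u : Fin (m + 1 + n₂) → ℝ,
      (List.ofFn fun j => H ((splitEquiv (m + 1) n₂ u).1 j)).prod *
        (List.ofFn fun j => H ((splitEquiv (m + 1) n₂ u).2 j)).prod
      = (List.ofFn fun j => H (u j)).prod := F_split H (m + 1) n₂
  rw [setIntegral_congr_fun
    ((isClosed_region _ _ _).measurableSet.union (isClosed_region _ _ _).measurableSet)
    (fun u _ => hgF u)]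
  have hdisj : AEDisjoint volume
      (region (m + 1 + n₂) (S₁ ∪ S₂.image (· + (m + 1))) t)
      (region (m + 1 + n₂) (S₁ ∪ {m + 1} ∪ S₂.image (· + (m + 1))) t) := by
    refine measure_mono_null (fun u hu => ?_)
      (volume_eq_coords_null (i := (⟨m, by omega⟩ : Fin (m + 1 + n₂)))
        (j := ⟨m + 1, by omega⟩) (by simp only [ne_eq, Fin.mk.injEq]; omega))
    obtain ⟨huA, huB⟩ := hu
    have hcA := huA.2 m (by omega)
    have hcB := huB.2 m (by omega)
    rw [if_neg (memA_eq h₁ hS₁ hS₂).1] at hcA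
    rw [if_pos (memA_eq h₁ hS₁ hS₂).2] at hcB
    exact le_antisymm hcA hcB
  exact integral_union_ae hdisj
    ((isClosed_region _ _ _).measurableSet.nullMeasurableSet)
    (integrableOn_prodFn hH (region_subset_Icc _ _ _))
    (integrableOn_prodFn hH (region_subset_Icc _ _ _))
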